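/- With Z = (Z_1,…,Z_n) i.i.d.-independent Bernoulli(p), p ∈ (0,1), and potential outcomes Y_j(z), the estimator (1/n)·Σ_j [ Y_j(Z)·1{Z_j = 1}/p − Y_j(Z)·1{Z_j = 0}/(1−p) ] is unbiased for the block direct intent-to-treat effect DITT_block(1,0,φ) = (1/n)·Σ_j [Ȳ_j(1,φ) − Ȳ_j(0,φ)], where Ȳ_j(z,φ) = Σ_{z_{(j)}} Y_j(z, z_{(j)})·P(Z_{(j)} = z_{(j)}). -/

import Mathlib

open Finset

/-- the IPW estimator (1/n)·Σ_j [Y_j(Z)·1{Z_j=1}/p − Y_j(Z)·1{Z_j=0}/(1−p)]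
is unbiased for the block direct intent-to-treat effect DITT_block(1,0,φ) =
(1/n)·Σ_j [Ȳ_j(1,φ) − Ȳ_j(0,φ)] under the independent Bernoulli(p) mechanism. -/
theorem stmt_10 (n : ℕ) (hn : 0 < n) (p : ℝ) (hp : 0 < p) (hp1 : p < 1)
    (Y : Fin n → (Fin n → Bool) → ℝ) :
    (∑ z : Fin n → Bool,
        ((1 / (n : ℝ)) * ∑ j,
            (Y j z * (if z j = true then 1 else 0) / p
              - Y j z * (if z j = false then 1 else 0) / (1 - p))) *
          ∏ k, (if z k then p else 1 - p))
    = (1 / (n : ℝ)) * ∑ j,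
        ((∑ z : Fin n → Bool,
            if z j = true then Y j z * ∏ k ∈ univ.erase j, (if z k then p else 1 - p) else 0)
          - ∑ z : Fin n → Bool,
            if z j = false then Y j z * ∏ k ∈ univ.erase j, (if z k then p else 1 - p) else 0) := by
  have hp' : p ≠ 0 := ne_of_gt hp
  have hq : (1 : ℝ) - p ≠ 0 := by linarith
  have key : ∀ (z : Fin n → Bool) (j : Fin n),
      (Y j z * (if z j = true then 1 else 0) / p
        - Y j z * (if z j = false then 1 else 0) / (1 - p))
        * ∏ k, (if z k then p else 1 - p)
      = (if z j = true then Y j z * ∏ k ∈ univ.erase j, (if z k then p else 1 - p) else 0)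
        - (if z j = false then Y j z * ∏ k ∈ univ.erase j, (if z k then p else 1 - p) else 0) := by
    intro z j
    rw [← Finset.mul_prod_erase univ _ (mem_univ j)]
    cases h : z j <;> simp [h] <;> field_simp <;> ring
  calc (∑ z : Fin n → Bool,
        ((1 / (n : ℝ)) * ∑ j,
            (Y j z * (if z j = true then 1 else 0) / p
              - Y j z * (if z j = false then 1 else 0) / (1 - p))) *
          ∏ k, (if z k then p else 1 - p))
      = (1 / (n : ℝ)) * ∑ z : Fin n → Bool, ∑ j,
          ((Y j z * (if z j = true then 1 else 0) / p
            - Y j z * (if z j = false then 1 else 0) / (1 - p))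
            * ∏ k, (if z k then p else 1 - p)) := by
        rw [Finset.mul_sum]
        refine Finset.sum_congr rfl fun z _ => ?_
        rw [mul_assoc, Finset.sum_mul]
    _ = (1 / (n : ℝ)) * ∑ j, ∑ z : Fin n → Bool,
          ((if z j = true then Y j z * ∏ k ∈ univ.erase j, (if z k then p else 1 - p) else 0)
            - (if z j = false then Y j z * ∏ k ∈ univ.erase j, (if z k then p else 1 - p) else 0)) := by
        rw [Finset.sum_comm]
        congr 1
        exact Finset.sum_congr rfl fun j _ => Finset.sum_congr rfl fun z _ => key z j
    _ = _ := by
        congr 1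
        exact Finset.sum_congr rfl fun j _ => Finset.sum_sub_distrib _ _
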